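/- arXiv:2212.10641 — 7 statements merged into one kernel-verified Lean document; each statement's English description precedes it below -/
import Mathlib

section
/- Every finite simple graph G = (V, E) contains an independent set I with |I| ≥ Σ_{x ∈ V} 1/(deg(x) + 1), where deg(x) is the degree of x in G. -/
open Finset

private def cwDeg {V : Type*} [DecidableEq V] (G : SimpleGraph V) [DecidableRel G.Adj]
    (S : Finset V) (x : V) : ℕ :=
  (S.filter (G.Adj x)).card

private lemma cw_key {V : Type*} [Fintype V] [DecidableEq V]
    (G : SimpleGraph V) [DecidableRel G.Adj] (S : Finset V) :
    ∃ I : Finset V, I ⊆ S ∧ (∀ u ∈ I, ∀ v ∈ I, ¬ G.Adj u v) ∧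
      ∑ x ∈ S, (1 : ℝ) / (cwDeg G S x + 1) ≤ I.card := by
  induction S using Finset.strongInduction with
  | _ S ih =>
    rcases S.eq_empty_or_nonempty with rfl | hS
    · exact ⟨∅, by simp⟩
    obtain ⟨v, hv, hvmin⟩ := S.exists_min_image (cwDeg G S) hS
    set N : Finset V := insert v (S.filter (G.Adj v)) with hN
    have hNsub : N ⊆ S := insert_subset hv (filter_subset _ _)
    have hNne : N.Nonempty := ⟨v, mem_insert_self _ _⟩
    have hss : S \ N ⊂ S := sdiff_ssubset hNsub hNne
    obtain ⟨I', hI'sub, hI'ind, hI'sum⟩ := ih (S \ N) hss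
    have hvnotS' : v ∉ S \ N := fun h => (mem_sdiff.1 h).2 (mem_insert_self _ _)
    have hvnotI' : v ∉ I' := fun h => hvnotS' (hI'sub h)
    refine ⟨insert v I', insert_subset hv (hI'sub.trans sdiff_subset), ?_, ?_⟩
    · intro u hu w hw
      have hadjv : ∀ x ∈ I', ¬ G.Adj v x := by
        intro x hx hadj
        have hxS' := hI'sub hx
        exact (mem_sdiff.1 hxS').2 (mem_insert_of_mem (mem_filter.2 ⟨(mem_sdiff.1 hxS').1, hadj⟩))
      have hu' := mem_insert.1 hu
      have hw' := mem_insert.1 hw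
      rcases hu' with hu' | hu' <;> rcases hw' with hw' | hw'
      · subst hu'; subst hw'; exact G.loopless.irrefl _
      · subst hu'; exact hadjv _ hw'
      · subst hw'; exact fun h => hadjv _ hu' h.symm
      · exact hI'ind _ hu' _ hw'
    · rw [card_insert_of_notMem hvnotI']
      push_cast
      have hsplit : ∑ x ∈ S \ N, (1 : ℝ) / (cwDeg G S x + 1)
          + ∑ x ∈ N, (1 : ℝ) / (cwDeg G S x + 1) = ∑ x ∈ S, (1 : ℝ) / (cwDeg G S x + 1) :=
        sum_sdiff hNsub
      have hNcard : (N.card : ℝ) = cwDeg G S v + 1 := by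
        have : v ∉ S.filter (G.Adj v) := fun h => G.loopless.irrefl v (mem_filter.1 h).2
        rw [hN, card_insert_of_notMem this]
        push_cast [cwDeg]
        ring
      have hNbound : ∑ x ∈ N, (1 : ℝ) / (cwDeg G S x + 1) ≤ 1 := by
        calc ∑ x ∈ N, (1 : ℝ) / (cwDeg G S x + 1)
            ≤ ∑ _x ∈ N, (1 : ℝ) / (cwDeg G S v + 1) := by
              refine sum_le_sum fun x hx => ?_
              apply one_div_le_one_div_of_le
              · positivity
              · have := hvmin x (hNsub hx)
                exact_mod_cast Nat.add_le_add_right this 1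
          _ = 1 := by
              rw [sum_const, nsmul_eq_mul, ← hNcard]
              have : (0:ℝ) < N.card := by exact_mod_cast card_pos.2 hNne
              field_simp
      have hS'bound : ∑ x ∈ S \ N, (1 : ℝ) / (cwDeg G S x + 1)
          ≤ ∑ x ∈ S \ N, (1 : ℝ) / (cwDeg G (S \ N) x + 1) := by
        refine sum_le_sum fun x _ => ?_
        apply one_div_le_one_div_of_le
        · positivity
        · have : cwDeg G (S \ N) x ≤ cwDeg G S x :=
            card_le_card (filter_subset_filter _ sdiff_subset)
          exact_mod_cast Nat.add_le_add_right this 1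
      linarith
  
/-- **Caro–Wei bound.** Every finite simple graph `G` contains an independent set `I`
with `|I| ≥ ∑_{x ∈ V} 1/(deg(x) + 1)`. -/
theorem caro_wei_independent_set {V : Type*} [Fintype V] [DecidableEq V]
    (G : SimpleGraph V) [DecidableRel G.Adj] :
    ∃ I : Finset V, (∀ u ∈ I, ∀ v ∈ I, ¬ G.Adj u v) ∧
      ∑ x : V, (1 : ℝ) / (G.degree x + 1) ≤ I.card := by
  obtain ⟨I, _, hind, hsum⟩ := cw_key G Finset.univ
  refine ⟨I, hind, ?_⟩
  have hdeg : ∀ x, G.degree x = cwDeg G Finset.univ x := by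
    intro x
    simp [cwDeg, SimpleGraph.degree, SimpleGraph.neighborFinset_eq_filter]
  calc ∑ x : V, (1 : ℝ) / (G.degree x + 1)
      = ∑ x : V, (1 : ℝ) / (cwDeg G Finset.univ x + 1) := by
        refine Finset.sum_congr rfl fun x _ => by rw [hdeg]
    _ ≤ I.card := hsum
end

section
/- Let X₁, …, X_k be {0,1}-valued random variables on a probability space and let c ∈ [0,1] be a real number such that for every i ∈ [k], the conditional expectation E[X_i ∣ σ(X₁, …, X_{i−1})] ≤ c almost surely. Then for every real t ≥ 3, Pr[Σ_{i ∈ [k]} X_i ≥ (1 + t)·k·c] ≤ 2^{−t·k·c}. -/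
open MeasureTheory Finset

/-- **Mix of Chernoff bound and Azuma's inequality** (Lemma 2.2): if `X₁, …, X_k` are
`{0,1}`-valued random variables with `E[Xᵢ ∣ σ(X₁,…,X_{i-1})] ≤ c` a.s. for some `c ∈ [0,1]`,
then for all `t ≥ 3`, `Pr[∑ Xᵢ ≥ (1+t)·k·c] ≤ 2^{-t·k·c}`. -/
theorem chernoff_azuma_mix {Ω : Type*} [MeasurableSpace Ω] (μ : Measure Ω)
    [IsProbabilityMeasure μ] (k : ℕ) (X : Fin k → Ω → ℝ)
    (hmeas : ∀ i, Measurable (X i))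
    (hval : ∀ i ω, X i ω = 0 ∨ X i ω = 1)
    (c : ℝ) (hc0 : 0 ≤ c) (hc1 : c ≤ 1)
    (hcond : ∀ i : Fin k, ∀ᵐ ω ∂μ,
      (μ[X i | ⨆ j : Fin k, ⨆ _ : j < i, MeasurableSpace.comap (X j) inferInstance]) ω ≤ c)
    (t : ℝ) (ht : 3 ≤ t) :
    μ {ω | (1 + t) * k * c ≤ ∑ i, X i ω} ≤ ENNReal.ofReal ((2 : ℝ) ^ (-(t * k * c))) := by
  classical
  set 𝔾 : Fin k → MeasurableSpace Ω :=
    fun i => ⨆ j : Fin k, ⨆ _ : j < i, MeasurableSpace.comap (X j) inferInstance with h𝔾def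
  have h𝔾le : ∀ i, 𝔾 i ≤ ‹MeasurableSpace Ω› := by
    intro i
    refine iSup₂_le fun j _ => ?_
    exact measurable_iff_comap_le.mp (hmeas j)
  have hX𝔾 : ∀ i j : Fin k, j < i → Measurable[𝔾 i] (X j) := by
    intro i j hj
    have h1 : Measurable[MeasurableSpace.comap (X j) inferInstance] (X j) :=
      measurable_iff_comap_le.mpr le_rfl
    exact h1.mono (le_iSup_of_le j (le_iSup_of_le hj le_rfl)) le_rfl
  have hX0 : ∀ i ω, 0 ≤ X i ω := by
    intro i ω; rcases hval i ω with h | h <;> simp [h]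
  have hX1 : ∀ i ω, X i ω ≤ 1 := by
    intro i ω; rcases hval i ω with h | h <;> simp [h]
  set g : ℕ → Ω → ℝ := fun n ω => ∏ j ∈ univ.filter (fun j : Fin k => (j : ℕ) < n),
    (1 + 3 * X j ω) with hgdef
  have hg1 : ∀ n ω, 1 ≤ g n ω := by
    intro n ω
    rw [hgdef]
    calc (1:ℝ) = ∏ _j ∈ univ.filter (fun j : Fin k => (j : ℕ) < n), (1:ℝ) := by simp
      _ ≤ ∏ j ∈ univ.filter (fun j : Fin k => (j : ℕ) < n), (1 + 3 * X j ω) := by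
          refine Finset.prod_le_prod (fun j _ => zero_le_one) fun j _ => ?_
          nlinarith [hX0 j ω]
  have hgbd : ∀ n ω, g n ω ≤ 4 ^ k := by
    intro n ω
    rw [hgdef]
    calc ∏ j ∈ univ.filter (fun j : Fin k => (j : ℕ) < n), (1 + 3 * X j ω)
        ≤ ∏ _j ∈ univ.filter (fun j : Fin k => (j : ℕ) < n), (4 : ℝ) := by
          refine Finset.prod_le_prod (fun j _ => by nlinarith [hX0 j ω]) ?_
          intro j _; nlinarith [hX1 j ω]
      _ = 4 ^ (univ.filter (fun j : Fin k => (j : ℕ) < n)).card := by rw [Finset.prod_const]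
      _ ≤ 4 ^ k := by
          refine pow_le_pow_right₀ (by norm_num) ?_
          exact le_trans (Finset.card_filter_le _ _) (by simp)
  have hgnorm : ∀ n ω, ‖g n ω‖ ≤ 4 ^ k := by
    intro n ω
    rw [Real.norm_eq_abs, abs_of_nonneg (le_trans zero_le_one (hg1 n ω))]
    exact hgbd n ω
  have hgmeas : ∀ n, Measurable (g n) := by
    intro n
    rw [hgdef]
    exact Finset.measurable_prod _ fun j _ => (measurable_const.add ((hmeas j).const_mul 3))
  have hgint : ∀ n, Integrable (g n) μ := by
    intro n
    refine (integrable_const (4 ^ k : ℝ)).mono' (hgmeas n).aestronglyMeasurable ?_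
    exact ae_of_all μ (hgnorm n)
  have hg𝔾 : ∀ (i : Fin k) (n : ℕ), n ≤ (i : ℕ) → StronglyMeasurable[𝔾 i] (g n) := by
    intro i n hn
    refine Measurable.stronglyMeasurable ?_
    rw [hgdef]
    refine Finset.measurable_prod _ fun j hj => ?_
    simp only [Finset.mem_filter] at hj
    have hji : j < i := Fin.lt_def.mpr (show (j:ℕ) < (i:ℕ) from lt_of_lt_of_le hj.2 hn)
    exact (measurable_const.add ((hX𝔾 i j hji).const_mul 3))
  have hkey : ∀ n, n ≤ k → ∫ ω, g n ω ∂μ ≤ (1 + 3 * c) ^ n := by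
    intro n
    induction n with
    | zero =>
      intro _
      simp [hgdef]
    | succ n ih =>
      intro hnk
      have hnk' : n < k := hnk
      set i : Fin k := ⟨n, hnk'⟩ with hidef
      have hstep : ∀ ω, g (n + 1) ω = g n ω * (1 + 3 * X i ω) := by
        intro ω
        rw [hgdef]
        simp only
        have hins : univ.filter (fun j : Fin k => (j : ℕ) < n + 1) =
            insert i (univ.filter (fun j : Fin k => (j : ℕ) < n)) := by
          ext j
          simp only [Finset.mem_insert, Finset.mem_filter, Finset.mem_univ, true_and]
          constructor
          · intro hj
            rcases Nat.lt_succ_iff_lt_or_eq.mp hj with h | h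
            · exact Or.inr h
            · exact Or.inl (Fin.ext h)
          · rintro (rfl | hj)
            · exact Nat.lt_succ_self n
            · exact Nat.lt_succ_of_lt hj
        rw [hins, Finset.prod_insert (by simp [hidef])]
        ring
      have hXint : Integrable (X i) μ := by
        refine (integrable_const (1 : ℝ)).mono' (hmeas i).aestronglyMeasurable ?_
        refine ae_of_all μ fun ω => ?_
        rw [Real.norm_eq_abs, abs_of_nonneg (hX0 i ω)]; exact hX1 i ω
      have hgXint : Integrable (fun ω => g n ω * X i ω) μ := by
        exact Integrable.bdd_mul hXint (hgmeas n).aestronglyMeasurable (ae_of_all μ (hgnorm n))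
      have hpull : μ[(fun ω => g n ω * X i ω) | 𝔾 i] =ᵐ[μ] fun ω => g n ω * (μ[X i | 𝔾 i]) ω :=
        condExp_stronglyMeasurable_mul_of_bound (h𝔾le i)
          (hg𝔾 i n le_rfl) hXint (4 ^ k) (ae_of_all μ (hgnorm n))
      have hcondint : Integrable (fun ω => g n ω * (μ[X i | 𝔾 i]) ω) μ := by
        exact Integrable.bdd_mul integrable_condExp (hgmeas n).aestronglyMeasurable
          (ae_of_all μ (hgnorm n))
      have hEgX : ∫ ω, g n ω * X i ω ∂μ ≤ c * ∫ ω, g n ω ∂μ := by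
        have h1 : ∫ ω, g n ω * X i ω ∂μ = ∫ ω, (μ[(fun ω => g n ω * X i ω) | 𝔾 i]) ω ∂μ :=
          (integral_condExp (h𝔾le i)).symm
        rw [h1, integral_congr_ae hpull]
        have h2 : ∫ ω, g n ω * (μ[X i | 𝔾 i]) ω ∂μ ≤ ∫ ω, g n ω * c ∂μ := by
          refine integral_mono_ae hcondint ((hgint n).mul_const c) ?_
          filter_upwards [hcond i] with ω hω
          exact mul_le_mul_of_nonneg_left hω (le_trans zero_le_one (hg1 n ω))
        calc ∫ ω, g n ω * (μ[X i | 𝔾 i]) ω ∂μ ≤ ∫ ω, g n ω * c ∂μ := h2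
          _ = c * ∫ ω, g n ω ∂μ := by rw [integral_mul_const]; ring
      calc ∫ ω, g (n + 1) ω ∂μ = ∫ ω, (g n ω + 3 * (g n ω * X i ω)) ∂μ := by
            refine integral_congr_ae (ae_of_all μ fun ω => ?_)
            rw [hstep ω]; ring
        _ = ∫ ω, g n ω ∂μ + 3 * ∫ ω, g n ω * X i ω ∂μ := by
            rw [integral_add (hgint n) (hgXint.const_mul 3), integral_const_mul]
        _ ≤ (1 + 3 * c) ^ n + 3 * (c * (1 + 3 * c) ^ n) := by
            have h3 : ∫ ω, g n ω * X i ω ∂μ ≤ c * (1 + 3 * c) ^ n :=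
              le_trans hEgX (mul_le_mul_of_nonneg_left (ih (le_of_lt hnk')) hc0)
            have h4 := ih (le_of_lt hnk')
            linarith
        _ = (1 + 3 * c) ^ (n + 1) := by ring
  -- g k = 4 ^ (∑ X) (rpow)
  have hgk : ∀ ω, g k ω = (4 : ℝ) ^ (∑ i, X i ω) := by
    intro ω
    have hfull : univ.filter (fun j : Fin k => (j : ℕ) < k) = univ := by
      ext j; simp [j.isLt]
    rw [hgdef]
    simp only [hfull]
    have hfac : ∀ j : Fin k, (1 + 3 * X j ω) = Real.exp (Real.log 4 * X j ω) := by
      intro j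
      rcases hval j ω with h | h <;> rw [h] <;>
        norm_num [Real.exp_log (show (0:ℝ) < 4 by norm_num)]
    rw [Real.rpow_def_of_pos (by norm_num : (0:ℝ) < 4)]
    rw [Finset.prod_congr rfl fun j _ => hfac j, ← Real.exp_sum, Finset.mul_sum]
  -- Markov
  set a : ℝ := (1 + t) * k * c with hadef
  have ha0 : 0 ≤ a := by
    rw [hadef]
    exact mul_nonneg (mul_nonneg (by linarith : (0:ℝ) ≤ 1 + t) (Nat.cast_nonneg k)) hc0
  have hsub : {ω | a ≤ ∑ i, X i ω} ⊆ {ω | (4:ℝ) ^ a ≤ g k ω} := by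
    intro ω hω
    rw [Set.mem_setOf_eq, hgk ω]
    exact Real.rpow_le_rpow_of_exponent_le (by norm_num) hω
  have hmarkov := mul_meas_ge_le_integral_of_nonneg
    (ae_of_all μ fun ω => le_trans zero_le_one (hg1 k ω)) (hgint k) ((4:ℝ) ^ a)
  have h4a : (0:ℝ) < (4:ℝ) ^ a := Real.rpow_pos_of_pos (by norm_num) a
  have hfin : μ {ω | a ≤ ∑ i, X i ω} ≠ ⊤ := measure_ne_top μ _
  have hmono : μ {ω | a ≤ ∑ i, X i ω} ≤ μ {ω | (4:ℝ) ^ a ≤ g k ω} := measure_mono hsub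
  -- toReal bound
  have htr : (μ {ω | a ≤ ∑ i, X i ω}).toReal ≤ (1 + 3*c)^k / (4:ℝ) ^ a := by
    rw [le_div_iff₀ h4a]
    calc (μ {ω | a ≤ ∑ i, X i ω}).toReal * (4:ℝ) ^ a
        ≤ (μ {ω | (4:ℝ) ^ a ≤ g k ω}).toReal * (4:ℝ) ^ a := by
          refine mul_le_mul_of_nonneg_right ?_ h4a.le
          exact ENNReal.toReal_mono (measure_ne_top μ _) hmono
      _ = (4:ℝ) ^ a * (μ {ω | (4:ℝ) ^ a ≤ g k ω}).toReal := by ring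
      _ ≤ ∫ ω, g k ω ∂μ := hmarkov
      _ ≤ (1 + 3*c)^k := hkey k le_rfl
  -- numeric bound
  have hnum : (1 + 3*c)^k / (4:ℝ) ^ a ≤ (2 : ℝ) ^ (-(t * k * c)) := by
    have hkc0 : (0:ℝ) ≤ (k:ℝ) * c := mul_nonneg (Nat.cast_nonneg k) hc0
    have h1 : (1 + 3*c)^k ≤ Real.exp (3 * ((k:ℝ) * c)) := by
      calc (1 + 3*c)^k ≤ (Real.exp (3*c))^k := by
            refine pow_le_pow_left₀ (by nlinarith) ?_ k
            have := Real.add_one_le_exp (3*c)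
            linarith
        _ = Real.exp (3 * ((k:ℝ) * c)) := by
            rw [← Real.exp_nat_mul]; ring_nf
    have hlog4 : Real.log 4 = 2 * Real.log 2 := by
      rw [show (4:ℝ) = 2^2 by norm_num, Real.log_pow]; push_cast; ring
    rw [div_le_iff₀ h4a]
    rw [Real.rpow_def_of_pos (by norm_num : (0:ℝ) < 4),
      Real.rpow_def_of_pos (by norm_num : (0:ℝ) < 2), ← Real.exp_add]
    refine le_trans h1 (Real.exp_le_exp.mpr ?_)
    rw [hlog4, hadef]
    have hL1 : (0.6931471803 : ℝ) ≤ Real.log 2 := Real.log_two_gt_d9.le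
    have hL0 : (0:ℝ) ≤ Real.log 2 := by linarith
    nlinarith [mul_nonneg (mul_nonneg (sub_nonneg.mpr ht) hkc0) hL0,
      mul_nonneg hkc0 (by linarith : (0:ℝ) ≤ 5 * Real.log 2 - 3)]
  calc μ {ω | a ≤ ∑ i, X i ω} = ENNReal.ofReal ((μ {ω | a ≤ ∑ i, X i ω}).toReal) := by
        rw [ENNReal.ofReal_toReal hfin]
    _ ≤ ENNReal.ofReal ((2 : ℝ) ^ (-(t * k * c))) :=
        ENNReal.ofReal_le_ofReal (le_trans htr hnum)
end

section
/- Let n ≥ 2 be an integer, U a finite set with |U| ≤ n, k a positive integer, and p an integer with p ≥ 8·n·log₂ n. Let w : U × {0,1}^k → ℝ be nonnegative weights such that for every x ∈ U, Σ_{j ∈ {0,1}^k} w(x,j) = 1 and every nonzero value w(x,j) satisfies w(x,j) ≥ 1/n. Then there exists a function g : U × [p] → {0,1}^k such that for every x ∈ U and every j ∈ {0,1}^k, |{r ∈ [p] : g(x,r) = j}| / p ≤ w(x,j)·(1 + 1/(8·log₂ n)). -/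
def gwFiberEquiv {J : Type*} (F : J → Type*) (j : J) :
    {s : Σ j', F j' // s.1 = j} ≃ F j where
  toFun s := cast (congrArg F s.2) s.1.2
  invFun x := ⟨⟨j, x⟩, rfl⟩
  left_inv s := by rcases s with ⟨⟨j', x⟩, h⟩; subst h; rfl
  right_inv x := rfl

lemma gw_fiber_exists {J : Type*} [Fintype J] [DecidableEq J] (c : J → ℕ) (p : ℕ)
    (hc : ∑ j, c j = p) :
    ∃ g : Fin p → J, ∀ j, (Finset.univ.filter fun r => g r = j).card = c j := by
  have hcard : Fintype.card (Σ j, Fin (c j)) = Fintype.card (Fin p) := by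
    simp [hc]
  let e : (Σ j, Fin (c j)) ≃ Fin p := Fintype.equivOfCardEq hcard
  refine ⟨fun r => (e.symm r).1, fun j => ?_⟩
  have h1 : (Finset.univ.filter fun r => (e.symm r).1 = j).card
      = Fintype.card {r : Fin p // (e.symm r).1 = j} :=
    (Fintype.card_subtype _).symm
  rw [h1]
  have e2 : {r : Fin p // (e.symm r).1 = j} ≃ {s : Σ j', Fin (c j') // s.1 = j} :=
    e.symm.subtypeEquiv (fun _ => Iff.rfl)
  rw [Fintype.card_congr (e2.trans (gwFiberEquiv _ j))]
  simp

lemma gw_counts_exist (n : ℕ) (hn : 2 ≤ n) {J : Type*} [Fintype J] [DecidableEq J]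
    (p : ℕ) (hp : 8 * (n : ℝ) * Real.logb 2 n ≤ p)
    (w : J → ℝ) (hw0 : ∀ j, 0 ≤ w j) (hw1 : ∑ j, w j = 1)
    (hwlb : ∀ j, w j ≠ 0 → 1 / (n : ℝ) ≤ w j) :
    ∃ c : J → ℕ, (∑ j, c j = p) ∧
      ∀ j, (c j : ℝ) / p ≤ w j * (1 + 1 / (8 * Real.logb 2 n)) := by
  set L := Real.logb 2 n with hLdef
  have hL1 : 1 ≤ L := by
    rw [hLdef]
    have : Real.logb 2 2 ≤ Real.logb 2 n :=
      Real.logb_le_logb_of_le (by norm_num) (by norm_num) (by exact_mod_cast hn)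
    simpa using this
  have hn2 : (2 : ℝ) ≤ n := by exact_mod_cast hn
  have hpR : (16 : ℝ) ≤ p := by nlinarith
  have hp0 : (0 : ℝ) < p := by linarith
  have hpN : 0 < p := by exact_mod_cast hp0
  set N : Finset J := Finset.univ.filter fun j => w j ≠ 0 with hN
  have hNne : N.Nonempty := by
    by_contra h
    rw [Finset.not_nonempty_iff_eq_empty] at h
    have : ∑ j, w j = 0 := by
      apply Finset.sum_eq_zero
      intro j _
      by_contra hj
      have : j ∈ N := by simp [hN, hj]
      simp [h] at this
    rw [hw1] at this; norm_num at this
  set m : ℕ := ∑ j, ⌊w j * p⌋₊ with hm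
  -- sum of floors over N equals m
  have hmN : m = ∑ j ∈ N, ⌊w j * p⌋₊ := by
    rw [hm]
    symm
    apply Finset.sum_subset (Finset.subset_univ _)
    intro j _ hj
    have : w j = 0 := by
      by_contra hc; exact hj (by simp [hN, hc])
    simp [this]
  have hsum_wp : ∑ j ∈ N, w j * p = p := by
    have : ∑ j ∈ N, w j = 1 := by
      rw [← hw1]
      apply Finset.sum_subset (Finset.subset_univ _)
      intro j _ hj
      by_contra hc; exact hj (by simp [hN, hc])
    rw [← Finset.sum_mul, this, one_mul]
  have hmle : (m : ℝ) ≤ p := by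
    calc (m : ℝ) = ∑ j ∈ N, (⌊w j * p⌋₊ : ℝ) := by rw [hmN]; push_cast; ring
    _ ≤ ∑ j ∈ N, w j * p := by
        apply Finset.sum_le_sum
        intro j _
        exact Nat.floor_le (mul_nonneg (hw0 j) (by positivity))
    _ = p := hsum_wp
  have hmleN : m ≤ p := by exact_mod_cast hmle
  have hplt : (p : ℝ) < m + N.card := by
    calc (p : ℝ) = ∑ j ∈ N, w j * p := hsum_wp.symm
    _ < ∑ j ∈ N, ((⌊w j * p⌋₊ : ℝ) + 1) := by
        apply Finset.sum_lt_sum_of_nonempty hNne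
        intro j _
        exact Nat.lt_floor_add_one _
    _ = m + N.card := by
        rw [Finset.sum_add_distrib, hmN]
        push_cast
        simp
  have hd : p - m ≤ N.card := by
    have : p < m + N.card := by exact_mod_cast hplt
    omega
  obtain ⟨S, hSN, hScard⟩ := Finset.exists_subset_card_eq hd
  refine ⟨fun j => ⌊w j * p⌋₊ + (if j ∈ S then 1 else 0), ?_, ?_⟩
  · rw [Finset.sum_add_distrib, ← hm]
    have : (∑ j, if j ∈ S then 1 else 0) = S.card := by
      simp [Finset.sum_ite_mem]
    rw [this, hScard]
    omega
  · intro j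
    have hLpos : (0 : ℝ) < 8 * L := by linarith
    have hε : (0 : ℝ) ≤ 1 / (8 * L) := by positivity
    by_cases hj : w j = 0
    · have hjS : j ∉ S := fun h => by
        have := hSN h
        simp [hN, hj] at this
      simp [hj, hjS]
    · have hwlbj := hwlb j hj
      have hkey : 1 ≤ w j * (1 / (8 * L)) * p := by
        have hn0 : (0 : ℝ) < n := by linarith
        calc (1 : ℝ) = (1 / n) * (1 / (8 * L)) * (8 * n * L) := by
              field_simp
            _ ≤ w j * (1 / (8 * L)) * (8 * n * L) := by
              apply mul_le_mul_of_nonneg_right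
              · apply mul_le_mul_of_nonneg_right hwlbj hε
              · nlinarith
            _ ≤ w j * (1 / (8 * L)) * p := by
              apply mul_le_mul_of_nonneg_left hp
              exact mul_nonneg (le_trans (by positivity) hwlbj) hε
      rw [div_le_iff₀ hp0]
      by_cases hjS : j ∈ S
      · simp only [hjS, if_true]
        push_cast
        have hfl : (⌊w j * p⌋₊ : ℝ) ≤ w j * p := Nat.floor_le (mul_nonneg (hw0 j) (by positivity))
        have : w j * (1 + 1 / (8 * L)) * p = w j * p + w j * (1 / (8 * L)) * p := by ring
        rw [this]
        linarith
      · simp only [hjS, if_false]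
        push_cast
        have hfl : (⌊w j * p⌋₊ : ℝ) ≤ w j * p := Nat.floor_le (mul_nonneg (hw0 j) (by positivity))
        have : w j * (1 + 1 / (8 * L)) * p = w j * p + w j * (1 / (8 * L)) * p := by ring
        rw [this]
        nlinarith [mul_nonneg (mul_nonneg (hw0 j) hε) hp0.le]

/-- Lemma 3.2 of the paper: for `p ≥ 8·n·log₂ n` and normalized weights `w(x,·)` on `{0,1}^k`
(each nonzero weight being `≥ 1/n`), there is `g : U × [p] → {0,1}^k` with
`|g⁻¹(x,j)|/p ≤ w(x,j)·(1 + 1/(8·log₂ n))` for all `x, j`. -/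
theorem gw_function_exists (n : ℕ) (hn : 2 ≤ n) {U : Type*} [Fintype U]
    (hU : Fintype.card U ≤ n) (k : ℕ) (hk : 0 < k) (p : ℕ)
    (hp : 8 * (n : ℝ) * Real.logb 2 n ≤ p)
    (w : U → (Fin k → Bool) → ℝ)
    (hw0 : ∀ x j, 0 ≤ w x j)
    (hw1 : ∀ x, ∑ j, w x j = 1)
    (hwlb : ∀ x j, w x j ≠ 0 → 1 / (n : ℝ) ≤ w x j) :
    ∃ g : U → Fin p → (Fin k → Bool), ∀ x j,
      ((Finset.univ.filter fun r => g x r = j).card : ℝ) / p ≤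
        w x j * (1 + 1 / (8 * Real.logb 2 n)) := by
  have hx : ∀ x : U, ∃ g : Fin p → (Fin k → Bool), ∀ j,
      ((Finset.univ.filter fun r => g r = j).card : ℝ) / p ≤
        w x j * (1 + 1 / (8 * Real.logb 2 n)) := by
    intro x
    obtain ⟨c, hc1, hc2⟩ := gw_counts_exist n hn p hp (w x) (hw0 x) (hw1 x) (hwlb x)
    obtain ⟨g, hg⟩ := gw_fiber_exists c p hc1
    exact ⟨g, fun j => by rw [hg j]; exact hc2 j⟩
  choose g hg using hx
  exact ⟨g, hg⟩
end

section
/- Let H be a 2-universal family of functions from a finite set C to [s], and let L ⊆ C be nonempty. Then (1/|H|) · Σ_{h ∈ H} max_{j ∈ [s]} (|L ∩ h^{−1}(j)| − 1) ≤ (|L| − 1) / √s. -/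
/-- The expected-maximum bound inside the proof of Lemma 3.9: for a 2-universal family `H` of
functions `C → [s]` and any nonempty `L ⊆ C`,
`(1/|H|)·∑_{h ∈ H} max_{j ∈ [s]} (|L ∩ h⁻¹(j)| − 1) ≤ (|L| − 1)/√s`. -/
theorem two_universal_max_bound {C : Type*} [Fintype C] [DecidableEq C]
    (s : ℕ) (hs : 0 < s) (H : Finset (C → Fin s)) (hH : H.Nonempty)
    (huniv : ∀ a b : C, a ≠ b →
      ((H.filter fun h => h a = h b).card : ℝ) / H.card ≤ 1 / s)
    (L : Finset C) (hL : L.Nonempty) :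
    (1 / (H.card : ℝ)) *
        ∑ h ∈ H, (⨆ j : Fin s, (((L.filter fun c => h c = j).card : ℝ) - 1))
      ≤ ((L.card : ℝ) - 1) / Real.sqrt s := by
  haveI : Nonempty (Fin s) := ⟨⟨0, hs⟩⟩
  set M : (C → Fin s) → ℝ :=
    fun h => ⨆ j : Fin s, (((L.filter fun c => h c = j).card : ℝ) - 1) with hMdef
  set n : ℝ := (H.card : ℝ) with hndef
  have hn : 0 < n := by rw [hndef]; exact_mod_cast Finset.card_pos.mpr hH
  have hs' : (0:ℝ) < s := by exact_mod_cast hs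
  set ℓ : ℝ := (L.card : ℝ) with hldef
  have hℓ : (1:ℝ) ≤ ℓ := by rw [hldef]; exact_mod_cast Finset.card_pos.mpr hL
  -- M h ≥ 0
  have hM0 : ∀ h : C → Fin s, 0 ≤ M h := by
    intro h
    obtain ⟨c, hc⟩ := hL
    have h1 : (1:ℝ) ≤ ((L.filter fun x => h x = h c).card : ℝ) := by
      have : c ∈ L.filter fun x => h x = h c := Finset.mem_filter.mpr ⟨hc, rfl⟩
      exact_mod_cast Finset.card_pos.mpr ⟨c, this⟩
    have : ((L.filter fun x => h x = h c).card : ℝ) - 1 ≤ M h :=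
      le_ciSup (f := fun j : Fin s => (((L.filter fun c => h c = j).card : ℝ) - 1))
        (Set.Finite.bddAbove (Set.finite_range _)) (h c)
    linarith
  -- collisions for each h
  have hcoll : ∀ h : C → Fin s, M h * (M h + 1)
      ≤ ((L.offDiag.filter fun p => h p.1 = h p.2).card : ℝ) := by
    intro h
    obtain ⟨j, hj⟩ := exists_eq_ciSup_of_finite
      (f := fun j : Fin s => (((L.filter fun c => h c = j).card : ℝ) - 1))
    set B := L.filter fun c => h c = j with hB
    have hsub : B.offDiag ⊆ L.offDiag.filter fun p => h p.1 = h p.2 := by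
      intro p hp
      rw [Finset.mem_offDiag] at hp
      obtain ⟨h1, h2, h3⟩ := hp
      rw [Finset.mem_filter] at h1 h2 ⊢
      exact ⟨Finset.mem_offDiag.mpr ⟨h1.1, h2.1, h3⟩, h1.2.trans h2.2.symm⟩
    have hcard : (B.offDiag.card : ℝ) ≤ _ :=
      Nat.cast_le.mpr (Finset.card_le_card hsub)
    have hod : (B.offDiag.card : ℝ) = (B.card : ℝ) * B.card - B.card := by
      rw [Finset.offDiag_card]
      rcases Nat.eq_zero_or_pos B.card with h0 | h0
      · simp [h0]
      · push_cast [Nat.cast_sub (Nat.le_mul_of_pos_left _ h0)]; ring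
    have hMh : M h = (B.card : ℝ) - 1 := hj.symm
    rw [hMh]
    have : ((B.card : ℝ) - 1) * ((B.card : ℝ) - 1 + 1)
        = (B.card : ℝ) * B.card - B.card := by ring
    rw [this, ← hod]
    exact hcard
  -- total collisions bounded
  have hsumcoll : (∑ h ∈ H, ((L.offDiag.filter fun p => h p.1 = h p.2).card : ℝ)) * s
      ≤ (ℓ * ℓ - ℓ) * n := by
    have swap : ∑ h ∈ H, ((L.offDiag.filter fun p => h p.1 = h p.2).card : ℕ)
        = ∑ p ∈ L.offDiag, (H.filter fun h => h p.1 = h p.2).card := by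
      simp_rw [Finset.card_filter]
      exact Finset.sum_comm
    have h1 : (∑ h ∈ H, ((L.offDiag.filter fun p => h p.1 = h p.2).card : ℝ))
        = ∑ p ∈ L.offDiag, ((H.filter fun h => h p.1 = h p.2).card : ℝ) := by
      have := congrArg (fun k : ℕ => (k : ℝ)) swap
      push_cast at this
      exact this
    rw [h1]
    have h2 : ∀ p ∈ L.offDiag,
        ((H.filter fun h => h p.1 = h p.2).card : ℝ) * s ≤ n := by
      intro p hp
      rw [Finset.mem_offDiag] at hp
      have := huniv p.1 p.2 hp.2.2
      rw [div_le_div_iff₀ hn hs'] at this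
      linarith
    calc (∑ p ∈ L.offDiag, ((H.filter fun h => h p.1 = h p.2).card : ℝ)) * s
        = ∑ p ∈ L.offDiag, ((H.filter fun h => h p.1 = h p.2).card : ℝ) * s := by
          rw [Finset.sum_mul]
      _ ≤ ∑ p ∈ L.offDiag, n := Finset.sum_le_sum h2
      _ = (L.offDiag.card : ℝ) * n := by rw [Finset.sum_const, nsmul_eq_mul]
      _ = (ℓ * ℓ - ℓ) * n := by
          rw [Finset.offDiag_card]
          have : L.card ≤ L.card * L.card := Nat.le_mul_of_pos_left _ (Finset.card_pos.mpr hL)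
          push_cast [Nat.cast_sub this]
          ring
  -- Cauchy-Schwarz
  set S : ℝ := ∑ h ∈ H, M h with hSdef
  have hS0 : 0 ≤ S := Finset.sum_nonneg fun h _ => hM0 h
  have hCS : S ^ 2 ≤ n * ∑ h ∈ H, M h ^ 2 := by
    exact_mod_cast sq_sum_le_card_mul_sum_sq (s := H) (f := M)
  have hMsum : (∑ h ∈ H, M h ^ 2) + S
      ≤ ∑ h ∈ H, ((L.offDiag.filter fun p => h p.1 = h p.2).card : ℝ) := by
    rw [hSdef, ← Finset.sum_add_distrib]
    refine Finset.sum_le_sum fun h _ => ?_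
    have := hcoll h
    nlinarith [this]
  -- key polynomial inequality
  have hkey : s * S ^ 2 + n * s * S ≤ n ^ 2 * (ℓ * ℓ - ℓ) := by
    have h1 : (∑ h ∈ H, M h ^ 2) * s + S * s
        ≤ (ℓ * ℓ - ℓ) * n := by
      calc (∑ h ∈ H, M h ^ 2) * s + S * s
          = ((∑ h ∈ H, M h ^ 2) + S) * s := by ring
        _ ≤ (∑ h ∈ H, ((L.offDiag.filter fun p => h p.1 = h p.2).card : ℝ)) * s :=
            mul_le_mul_of_nonneg_right hMsum (le_of_lt hs')
        _ ≤ (ℓ * ℓ - ℓ) * n := hsumcoll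
    nlinarith [hCS, mul_le_mul_of_nonneg_left h1 (le_of_lt hn)]
  -- finish
  set r : ℝ := Real.sqrt s with hrdef
  have hr2 : r * r = s := Real.mul_self_sqrt (le_of_lt hs')
  have hr1 : 1 ≤ r := by
    rw [hrdef]
    exact Real.one_le_sqrt.mpr (by exact_mod_cast hs)
  have hr0 : 0 < r := lt_of_lt_of_le one_pos hr1
  have hT0 : 0 ≤ r * S := mul_nonneg hr0.le hS0
  have hsr : r ≤ (s : ℝ) := by nlinarith [hr1, hr2]
  have e2 : n * (r * S) ≤ n * ↑s * S := by
    nlinarith [mul_nonneg (mul_nonneg hn.le hS0) (sub_nonneg.mpr hsr)]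
  have e1 : (r * S) ^ 2 = ↑s * S ^ 2 := by rw [← hr2]; ring
  have hkey2 : (r * S) ^ 2 + n * (r * S) ≤ n ^ 2 * (ℓ * ℓ - ℓ) := by linarith [hkey]
  have hgoal : S * r ≤ (ℓ - 1) * n := by
    have hpos : 0 < r * S + (ℓ - 1) * n + n := by
      have := mul_nonneg (sub_nonneg.mpr hℓ) hn.le
      linarith
    nlinarith [hkey2, hpos]
  rw [one_div, inv_mul_eq_div, div_le_div_iff₀ hn hr0]
  linarith
end

section
/- Let G = (V, E) be a finite simple graph, J a finite index set, and a : V × J → ℝ nonnegative with A(x) := Σ_{j ∈ J} a(x,j) > 0 for every x ∈ V. Let (J_x)_{x ∈ V} be independent random variables with Pr[J_x = j] = a(x,j)/A(x). Then E[ Σ_{{u,v} ∈ E} 1_{J_u = J_v} · (1/a(u, J_u) + 1/a(v, J_v)) ] ≤ Σ_{{u,v} ∈ E} (1/A(u) + 1/A(v)). (Note that a(x, J_x) > 0 almost surely, so the summands are almost surely well defined.) -/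
open Finset

lemma marg {V J : Type*} [Fintype V] [DecidableEq V] [Fintype J] [DecidableEq J]
    (a : V → J → ℝ) (hA : ∀ x, 0 < ∑ k, a x k) (u v : V) (huv : u ≠ v) (j : J) :
    ∑ f : V → J, (∏ x, a x (f x) / ∑ k, a x k) *
      ((if f u = j then (1:ℝ) else 0) * (if f v = j then 1 else 0))
    = (a u j / ∑ k, a u k) * (a v j / ∑ k, a v k) := by
  classical
  set t : V → J → ℝ := fun x k => (a x k / ∑ k', a x k') *
      ((if x = u then (if k = j then (1:ℝ) else 0) else 1) *
       (if x = v then (if k = j then (1:ℝ) else 0) else 1)) with ht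
  have key : ∀ f : V → J, (∏ x, a x (f x) / ∑ k, a x k) *
      ((if f u = j then (1:ℝ) else 0) * (if f v = j then 1 else 0))
      = ∏ x, t x (f x) := by
    intro f
    simp only [ht]
    rw [Finset.prod_mul_distrib, Finset.prod_mul_distrib,
      Finset.prod_ite_eq' Finset.univ u (fun x => if f x = j then (1:ℝ) else 0),
      Finset.prod_ite_eq' Finset.univ v (fun x => if f x = j then (1:ℝ) else 0)]
    simp
  simp only [key]
  rw [← Fintype.prod_sum]
  have h1 : ∀ x ∈ Finset.univ, x ∉ ({u, v} : Finset V) → (∑ k, t x k) = 1 := by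
    intro x _ hx
    simp only [Finset.mem_insert, Finset.mem_singleton, not_or] at hx
    simp only [ht, if_neg hx.1, if_neg hx.2, mul_one]
    rw [← Finset.sum_div, div_self (hA x).ne']
  have h2 : (∑ k, t u k) = a u j / ∑ k, a u k := by
    simp only [ht, if_pos rfl, if_neg huv, mul_one]
    simp [mul_ite]
  have h3 : (∑ k, t v k) = a v j / ∑ k, a v k := by
    simp only [ht, if_pos rfl, if_neg huv.symm, one_mul]
    simp [mul_ite]
  rw [← Finset.prod_subset (Finset.subset_univ ({u, v} : Finset V)) h1,
    Finset.prod_pair huv, h2, h3]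

lemma edge_bound {V J : Type*} [Fintype V] [DecidableEq V] [Fintype J] [DecidableEq J]
    (a : V → J → ℝ) (ha : ∀ x j, 0 ≤ a x j) (hA : ∀ x, 0 < ∑ k, a x k)
    (u v : V) (huv : u ≠ v) :
    ∑ f : V → J, (∏ x, a x (f x) / ∑ k, a x k) *
      (if f u = f v then 1 / a u (f u) + 1 / a v (f v) else 0)
    ≤ 1 / (∑ k, a u k) + 1 / (∑ k, a v k) := by
  classical
  have step1 : ∀ f : V → J,
      (if f u = f v then 1 / a u (f u) + 1 / a v (f v) else 0)
      = ∑ j, ((if f u = j then (1:ℝ) else 0) * (if f v = j then 1 else 0)) *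
          (1 / a u j + 1 / a v j) := by
    intro f
    by_cases h : f u = f v
    · rw [Finset.sum_eq_single (f u)]
      · simp [← h]
      · intro j _ hj
        simp [Ne.symm hj]
      · simp
    · rw [if_neg h]
      refine (Finset.sum_eq_zero ?_).symm
      intro j _
      by_cases h1 : f u = j
      · have : f v ≠ j := fun hh => h (h1.trans hh.symm)
        simp [this]
      · simp [h1]
  calc ∑ f : V → J, (∏ x, a x (f x) / ∑ k, a x k) *
        (if f u = f v then 1 / a u (f u) + 1 / a v (f v) else 0)
      = ∑ j, ((a u j / ∑ k, a u k) * (a v j / ∑ k, a v k)) * (1 / a u j + 1 / a v j) := by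
        simp only [step1, Finset.mul_sum]
        rw [Finset.sum_comm]
        refine Finset.sum_congr rfl fun j _ => ?_
        rw [← marg a hA u v huv j, Finset.sum_mul]
        refine Finset.sum_congr rfl fun f _ => by ring
    _ ≤ ∑ j, (a v j + a u j) / ((∑ k, a u k) * (∑ k, a v k)) := by
        refine Finset.sum_le_sum fun j _ => ?_
        have e1 : a u j * (1 / a u j) ≤ 1 := by
          rcases eq_or_lt_of_le (ha u j) with h | h
          · simp [← h]
          · rw [mul_one_div, div_self h.ne']
        have e2 : a v j * (1 / a v j) ≤ 1 := by
          rcases eq_or_lt_of_le (ha v j) with h | h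
          · simp [← h]
          · rw [mul_one_div, div_self h.ne']
        have key : (a u j / ∑ k, a u k) * (a v j / ∑ k, a v k) * (1 / a u j + 1 / a v j)
            = (a u j * (1 / a u j)) * (a v j * ((∑ k, a u k) * (∑ k, a v k))⁻¹)
            + (a v j * (1 / a v j)) * (a u j * ((∑ k, a u k) * (∑ k, a v k))⁻¹) := by
          ring
        rw [key]
        have hpos : (0:ℝ) < (∑ k, a u k) * (∑ k, a v k) := mul_pos (hA u) (hA v)
        have b1 : a u j * (1 / a u j) * (a v j * ((∑ k, a u k) * (∑ k, a v k))⁻¹)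
            ≤ a v j * ((∑ k, a u k) * (∑ k, a v k))⁻¹ :=
          mul_le_of_le_one_left (mul_nonneg (ha v j) (inv_nonneg.2 (mul_pos (hA u) (hA v)).le)) e1
        have b2 : a v j * (1 / a v j) * (a u j * ((∑ k, a u k) * (∑ k, a v k))⁻¹)
            ≤ a u j * ((∑ k, a u k) * (∑ k, a v k))⁻¹ :=
          mul_le_of_le_one_left (mul_nonneg (ha u j) (inv_nonneg.2 (mul_pos (hA u) (hA v)).le)) e2
        calc _ ≤ a v j * ((∑ k, a u k) * (∑ k, a v k))⁻¹
              + a u j * ((∑ k, a u k) * (∑ k, a v k))⁻¹ := add_le_add b1 b2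
          _ = (a v j + a u j) / ((∑ k, a u k) * (∑ k, a v k)) := by
              rw [div_eq_mul_inv, add_mul]
    _ = 1 / (∑ k, a u k) + 1 / (∑ k, a v k) := by
        rw [← Finset.sum_div, Finset.sum_add_distrib,
          div_add_div _ _ (hA u).ne' (hA v).ne', one_mul, mul_one]

/-- Equation (3.6) of the paper: if every vertex `x` independently samples an index `J_x ∈ J`
with probability `a(x,j)/A(x)` (where `A(x) = ∑_j a(x,j) > 0`), then the expectation of
`∑_{{u,v} ∈ E} 1_{J_u = J_v}·(1/a(u,J_u) + 1/a(v,J_v))` is at most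
`∑_{{u,v} ∈ E} (1/A(u) + 1/A(v))`.  The expectation is written out explicitly as a sum over
all outcomes `f : V → J` weighted by `∏_x a(x, f x)/A(x)`. -/
theorem expected_potential_refinement {V J : Type*} [Fintype V] [DecidableEq V]
    [Fintype J] [DecidableEq J] (G : SimpleGraph V) [DecidableRel G.Adj]
    (a : V → J → ℝ) (ha : ∀ x j, 0 ≤ a x j) (hA : ∀ x, 0 < ∑ j, a x j) :
    (∑ f : V → J, (∏ x, a x (f x) / ∑ j, a x j) *
        (∑ e ∈ G.edgeFinset, Sym2.lift
          ⟨fun u v => if f u = f v then 1 / a u (f u) + 1 / a v (f v) else 0, by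
            intro u v
            by_cases h : f u = f v
            · simp [h, add_comm]
            · have h' : ¬(f v = f u) := fun hh => h hh.symm
              simp [h, h']⟩ e))
      ≤ ∑ e ∈ G.edgeFinset, Sym2.lift
          ⟨fun u v => 1 / (∑ j, a u j) + 1 / (∑ j, a v j), by
            intro u v; simp [add_comm]⟩ e := by
  simp only [Finset.mul_sum]
  rw [Finset.sum_comm]
  refine Finset.sum_le_sum fun e he => ?_
  induction e using Sym2.ind with
  | _ u v =>
    simp only [Sym2.lift_mk]
    have hadj : G.Adj u v := (SimpleGraph.mem_edgeFinset).1 he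
    exact edge_bound a ha hA u v hadj.ne
end

section
/- Let G = (V, E) be a finite simple graph with m edges and maximum degree at most Δ, let q ≥ 1 be an integer, and let (X_v)_{v ∈ V} be 4-wise independent uniform random variables taking values in [q]. Let D = |{ {u,v} ∈ E : X_u = X_v }| be the number of monochromatic edges. Then E[D] = m/q and Var[D] ≤ m·Δ/q² + m/q. -/
open MeasureTheory ProbabilityTheory

section Aux

variable {V : Type*} [Fintype V] [DecidableEq V]
variable {Ω : Type*} [MeasurableSpace Ω] {μ : Measure Ω}
variable {q : ℕ} {X : V → Ω → Fin q}

lemma aux_measSet (hmeas : ∀ v, Measurable (X v)) (S : Finset V) (b : V → Fin q) :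
    MeasurableSet {ω | ∀ v ∈ S, X v ω = b v} := by
  have h : {ω | ∀ v ∈ S, X v ω = b v} = ⋂ v ∈ S, X v ⁻¹' {b v} := by
    ext ω; simp
  rw [h]
  exact MeasurableSet.biInter S.countable_toSet
    fun v _ => (hmeas v) (measurableSet_singleton _)

lemma aux_cancel (hq : 1 ≤ q) (k : ℕ) :
    (q : ENNReal) * (q : ENNReal)⁻¹ ^ (k + 1) = (q : ENNReal)⁻¹ ^ k := by
  rw [pow_succ', ← mul_assoc, ENNReal.mul_inv_cancel (by exact_mod_cast (by omega : q ≠ 0))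
    (ENNReal.natCast_ne_top q), one_mul]

lemma aux_union {ι : Type*} [Fintype ι] (A : Set Ω) (f : ι → Set Ω)
    (hA : A = ⋃ i, f i) (hdisj : Pairwise (Function.onFun Disjoint f))
    (hm : ∀ i, MeasurableSet (f i)) (c : ENNReal) (hc : ∀ i, μ (f i) = c) :
    μ A = (Fintype.card ι : ENNReal) * c := by
  rw [hA, measure_iUnion hdisj hm, tsum_fintype]
  simp [hc, Finset.sum_const, nsmul_eq_mul]

lemma aux_meas_pair (hq : 1 ≤ q) (hmeas : ∀ v, Measurable (X v))
    (hindep : ∀ S : Finset V, S.card ≤ 4 → ∀ b : V → Fin q,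
      μ {ω | ∀ v ∈ S, X v ω = b v} = ((q : ENNReal))⁻¹ ^ S.card)
    {u v : V} (huv : u ≠ v) :
    μ {ω | X u ω = X v ω} = (q : ENNReal)⁻¹ := by
  have hcard : ({u, v} : Finset V).card = 2 := by
    rw [Finset.card_insert_of_notMem (by simpa using huv), Finset.card_singleton]
  have h := aux_union (μ := μ) {ω | X u ω = X v ω}
    (fun b : Fin q => {ω | ∀ w ∈ ({u, v} : Finset V), X w ω = (fun _ => b) w}) ?_ ?_
    (fun b => aux_measSet hmeas _ _) ((q : ENNReal)⁻¹ ^ 2)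
    (fun b => by rw [hindep _ (by rw [hcard]; norm_num) _, hcard])
  · rw [h, Fintype.card_fin]
    have := aux_cancel (q := q) hq 1
    rwa [pow_one] at this
  · ext ω
    simp only [Set.mem_setOf_eq, Set.mem_iUnion, Finset.mem_insert, Finset.mem_singleton]
    constructor
    · intro h
      exact ⟨X v ω, by rintro w (rfl | rfl) <;> simp [h]⟩
    · rintro ⟨b, hb⟩
      rw [hb u (Or.inl rfl), hb v (Or.inr rfl)]
  · intro b b' hbb
    simp only [Function.onFun, Set.disjoint_left, Set.mem_setOf_eq]
    intro ω hω hω'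
    exact hbb (by rw [← hω u (by simp), ← hω' u (by simp)])

lemma aux_meas_triple (hq : 1 ≤ q) (hmeas : ∀ v, Measurable (X v))
    (hindep : ∀ S : Finset V, S.card ≤ 4 → ∀ b : V → Fin q,
      μ {ω | ∀ v ∈ S, X v ω = b v} = ((q : ENNReal))⁻¹ ^ S.card)
    {a b c : V} (hab : a ≠ b) (hbc : b ≠ c) (hac : a ≠ c) :
    μ {ω | X a ω = X b ω ∧ X b ω = X c ω} = (q : ENNReal)⁻¹ ^ 2 := by
  have hcard : ({a, b, c} : Finset V).card = 3 := by
    rw [Finset.card_insert_of_notMem (by simp [hab, hac]),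
      Finset.card_insert_of_notMem (by simpa using hbc), Finset.card_singleton]
  have h := aux_union (μ := μ) {ω | X a ω = X b ω ∧ X b ω = X c ω}
    (fun d : Fin q => {ω | ∀ w ∈ ({a, b, c} : Finset V), X w ω = (fun _ => d) w}) ?_ ?_
    (fun d => aux_measSet hmeas _ _) ((q : ENNReal)⁻¹ ^ 3)
    (fun d => by rw [hindep _ (by rw [hcard]; norm_num) _, hcard])
  · rw [h, Fintype.card_fin]
    exact aux_cancel hq 2
  · ext ω
    simp only [Set.mem_setOf_eq, Set.mem_iUnion, Finset.mem_insert, Finset.mem_singleton]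
    constructor
    · intro h
      exact ⟨X b ω, by rintro w (rfl | rfl | rfl) <;> simp [h.1, h.2]⟩
    · rintro ⟨d, hd⟩
      rw [hd a (by tauto), hd b (by tauto), hd c (by tauto)]
      exact ⟨rfl, rfl⟩
  · intro d d' hdd
    simp only [Function.onFun, Set.disjoint_left, Set.mem_setOf_eq]
    intro ω hω hω'
    exact hdd (by rw [← hω a (by simp), ← hω' a (by simp)])

lemma aux_meas_quad (hq : 1 ≤ q) (hmeas : ∀ v, Measurable (X v))
    (hindep : ∀ S : Finset V, S.card ≤ 4 → ∀ b : V → Fin q,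
      μ {ω | ∀ v ∈ S, X v ω = b v} = ((q : ENNReal))⁻¹ ^ S.card)
    {a b c d : V} (hab : a ≠ b) (hac : a ≠ c) (had : a ≠ d)
    (hbc : b ≠ c) (hbd : b ≠ d) (hcd : c ≠ d) :
    μ {ω | X a ω = X b ω ∧ X c ω = X d ω} = (q : ENNReal)⁻¹ ^ 2 := by
  have hcard : ({a, b, c, d} : Finset V).card = 4 := by
    rw [Finset.card_insert_of_notMem (by simp [hab, hac, had]),
      Finset.card_insert_of_notMem (by simp [hbc, hbd]),
      Finset.card_insert_of_notMem (by simpa using hcd), Finset.card_singleton]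
  have h := aux_union (μ := μ) {ω | X a ω = X b ω ∧ X c ω = X d ω}
    (fun p : Fin q × Fin q =>
      {ω | ∀ w ∈ ({a, b, c, d} : Finset V), X w ω = (fun y => if y = a ∨ y = b then p.1 else p.2) w})
    ?_ ?_ (fun p => aux_measSet hmeas _ _) ((q : ENNReal)⁻¹ ^ 4)
    (fun p => by rw [hindep _ (le_of_eq hcard) _, hcard])
  · rw [h, Fintype.card_prod, Fintype.card_fin, Nat.cast_mul, mul_assoc,
      aux_cancel hq 3, aux_cancel hq 2]
  · ext ω
    simp only [Set.mem_setOf_eq, Set.mem_iUnion, Finset.mem_insert, Finset.mem_singleton]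
    constructor
    · intro h
      refine ⟨(X a ω, X c ω), ?_⟩
      rintro w (rfl | rfl | rfl | rfl)
      · simp
      · simp [h.1.symm]
      · simp [hac.symm, hbc.symm]
      · simp [had.symm, hbd.symm, h.2.symm]
    · rintro ⟨p, hp⟩
      have h1 := hp a (by simp)
      have h2 := hp b (by simp)
      have h3 := hp c (by simp)
      have h4 := hp d (by simp)
      simp only [hac.symm, hbc.symm, had.symm, hbd.symm, or_self, if_false, if_true,
        eq_self_iff_true, true_or, or_true, or_false, if_neg (not_or_intro hac.symm hbc.symm),
        if_neg (not_or_intro had.symm hbd.symm)] at h1 h2 h3 h4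
      rw [h1, h2, h3, h4]
      exact ⟨rfl, rfl⟩
  · intro p p' hpp
    simp only [Function.onFun, Set.disjoint_left, Set.mem_setOf_eq]
    intro ω hω hω'
    have h1 := hω a (by simp)
    have h1' := hω' a (by simp)
    have h3 := hω c (by simp)
    have h3' := hω' c (by simp)
    simp only [eq_self_iff_true, true_or, if_true,
      if_neg (not_or_intro hac.symm hbc.symm)] at h1 h1' h3 h3'
    exact hpp (Prod.ext (by rw [← h1, ← h1']) (by rw [← h3, ← h3']))

end Aux

/-- The moment computations inside the proof of Lemma 4.7: if `(X_v)` are 4-wise independent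
uniform random variables with values in `[q]` and `D` is the number of monochromatic edges of
a graph `G` with `m` edges and maximum degree at most `Δ`, then `E[D] = m/q` and
`Var[D] ≤ m·Δ/q² + m/q`. -/
theorem fourwise_monochromatic_moments {V : Type*} [Fintype V] [DecidableEq V]
    (G : SimpleGraph V) [DecidableRel G.Adj] (Δ q : ℕ) (hq : 1 ≤ q)
    (hΔ : ∀ v, G.degree v ≤ Δ)
    {Ω : Type*} [MeasurableSpace Ω] (μ : Measure Ω) [IsProbabilityMeasure μ]
    (X : V → Ω → Fin q) (hmeas : ∀ v, Measurable (X v))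
    (hindep : ∀ S : Finset V, S.card ≤ 4 → ∀ b : V → Fin q,
      μ {ω | ∀ v ∈ S, X v ω = b v} = ((q : ENNReal))⁻¹ ^ S.card)
    (D : Ω → ℝ)
    (hD : ∀ ω, D ω = ∑ e ∈ G.edgeFinset, Sym2.lift
      ⟨fun u v => if X u ω = X v ω then (1 : ℝ) else 0, by
        intro u v
        by_cases h : X u ω = X v ω
        · simp [h]
        · have h' : ¬(X v ω = X u ω) := fun hh => h hh.symm
          simp [h, h']⟩ e) :
    (∫ ω, D ω ∂μ) = (G.edgeFinset.card : ℝ) / q ∧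
    variance D μ ≤ (G.edgeFinset.card : ℝ) * Δ / q ^ 2 + (G.edgeFinset.card : ℝ) / q := by
  classical
  set m := G.edgeFinset.card with hm
  set g : V → V → Ω → ℝ := fun u v ω => if X u ω = X v ω then (1 : ℝ) else 0 with hg
  set F : Sym2 V → Ω → ℝ := fun e ω => Sym2.lift
      ⟨fun u v => if X u ω = X v ω then (1 : ℝ) else 0, by
        intro u v
        by_cases h : X u ω = X v ω
        · simp [h]
        · have h' : ¬(X v ω = X u ω) := fun hh => h hh.symm
          simp [h, h']⟩ e with hF
  have hDF : ∀ ω, D ω = ∑ e ∈ G.edgeFinset, F e ω := fun ω => hD ω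
  have hFmk : ∀ (u v : V) (ω : Ω), F s(u, v) ω = g u v ω := fun u v ω => Sym2.lift_mk _ u v
  have hA : ∀ u v : V, MeasurableSet {ω | X u ω = X v ω} :=
    fun u v => measurableSet_eq_fun (hmeas u) (hmeas v)
  have hgind : ∀ u v : V, g u v = ({ω | X u ω = X v ω}).indicator (1 : Ω → ℝ) := by
    intro u v; funext ω; simp [hg, Set.indicator_apply]
  have hgint : ∀ u v : V, Integrable (g u v) μ := by
    intro u v; rw [hgind]; exact (integrable_const 1).indicator (hA u v)
  have hgmeas : ∀ u v : V, Measurable (g u v) := by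
    intro u v; rw [hgind]; exact measurable_const.indicator (hA u v)
  have hE1 : ∀ u v : V, u ≠ v → ∫ ω, g u v ω ∂μ = (q : ℝ)⁻¹ := by
    intro u v huv
    rw [hgind]
    rw [integral_indicator_one (hA u v), measureReal_def, aux_meas_pair hq hmeas hindep huv]
    simp
  have hprod : ∀ u v w x : V, (fun ω => g u v ω * g w x ω)
      = ({ω | X u ω = X v ω} ∩ {ω | X w ω = X x ω}).indicator (1 : Ω → ℝ) := by
    intro u v w x; funext ω
    simp only [hg, Set.indicator_apply, Set.mem_inter_iff, Set.mem_setOf_eq]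
    by_cases h1 : X u ω = X v ω <;> by_cases h2 : X w ω = X x ω <;> simp [h1, h2]
  have hgsq : ∀ (u v : V) (ω : Ω), g u v ω * g u v ω = g u v ω := by
    intro u v ω
    by_cases h : X u ω = X v ω <;> simp [hg, h]
  have hE2 : ∀ u v w x : V, u ≠ v → w ≠ x → s(u, v) ≠ s(w, x) →
      ∫ ω, g u v ω * g w x ω ∂μ = ((q : ℝ)⁻¹) ^ 2 := by
    intro u v w x huv hwx hne
    have hne' : ¬((u = w ∧ v = x) ∨ (u = x ∧ v = w)) := by
      intro h; exact hne (Sym2.eq_iff.2 h)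
    have hmAB : μ ({ω | X u ω = X v ω} ∩ {ω | X w ω = X x ω}) = (q : ENNReal)⁻¹ ^ 2 := by
      rw [← Set.setOf_and]
      by_cases huw : u = w
      · subst huw
        have hvx : v ≠ x := fun h => hne' (Or.inl ⟨rfl, h⟩)
        have hset : {ω | X u ω = X v ω ∧ X u ω = X x ω}
            = {ω | X v ω = X u ω ∧ X u ω = X x ω} := by
          ext ω; exact ⟨fun h => ⟨h.1.symm, h.2⟩, fun h => ⟨h.1.symm, h.2⟩⟩
        rw [hset]
        exact aux_meas_triple hq hmeas hindep huv.symm hwx hvx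
      · by_cases hux : u = x
        · subst hux
          have hvw : v ≠ w := fun h => hne' (Or.inr ⟨rfl, h⟩)
          have hset : {ω | X u ω = X v ω ∧ X w ω = X u ω}
              = {ω | X v ω = X u ω ∧ X u ω = X w ω} := by
            ext ω; exact ⟨fun h => ⟨h.1.symm, h.2.symm⟩, fun h => ⟨h.1.symm, h.2.symm⟩⟩
          rw [hset]
          exact aux_meas_triple hq hmeas hindep huv.symm (fun h => huw h) hvw
        · by_cases hvw : v = w
          · subst hvw
            exact aux_meas_triple hq hmeas hindep huv hwx hux
          · by_cases hvx : v = x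
            · subst hvx
              have hset : {ω | X u ω = X v ω ∧ X w ω = X v ω}
                  = {ω | X u ω = X v ω ∧ X v ω = X w ω} := by
                ext ω; exact ⟨fun h => ⟨h.1, h.2.symm⟩, fun h => ⟨h.1, h.2.symm⟩⟩
              rw [hset]
              exact aux_meas_triple hq hmeas hindep huv (fun h => hvw h) huw
            · exact aux_meas_quad hq hmeas hindep huv huw hux hvw hvx hwx
    rw [show (∫ ω, g u v ω * g w x ω ∂μ)
        = ∫ ω, ({ω | X u ω = X v ω} ∩ {ω | X w ω = X x ω}).indicator (1 : Ω → ℝ) ω ∂μ from by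
      exact congrArg (integral μ) (hprod u v w x)]
    rw [integral_indicator_one ((hA u v).inter (hA w x)), measureReal_def, hmAB]
    simp [ENNReal.toReal_pow, ENNReal.toReal_inv]
  have hedge : ∀ e ∈ G.edgeFinset, ∃ u v : V, u ≠ v ∧ e = s(u, v) := by
    intro e
    induction e using Sym2.ind with
    | _ u v =>
      intro he
      rw [SimpleGraph.mem_edgeFinset, SimpleGraph.mem_edgeSet] at he
      exact ⟨u, v, he.ne, rfl⟩
  have hFint : ∀ e ∈ G.edgeFinset, Integrable (F e) μ := by
    intro e he
    obtain ⟨u, v, huv, rfl⟩ := hedge e he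
    have h : F s(u, v) = g u v := funext (hFmk u v)
    rw [h]; exact hgint u v
  have hFE : ∀ e ∈ G.edgeFinset, ∫ ω, F e ω ∂μ = (q : ℝ)⁻¹ := by
    intro e he
    obtain ⟨u, v, huv, rfl⟩ := hedge e he
    have h : F s(u, v) = g u v := funext (hFmk u v)
    rw [show (∫ ω, F s(u,v) ω ∂μ) = ∫ ω, g u v ω ∂μ from congrArg (integral μ) h]
    exact hE1 u v huv
  have hFPint : ∀ e ∈ G.edgeFinset, ∀ f ∈ G.edgeFinset,
      Integrable (fun ω => F e ω * F f ω) μ := by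
    intro e he f hf
    obtain ⟨u, v, huv, rfl⟩ := hedge e he
    obtain ⟨w, x, hwx, rfl⟩ := hedge f hf
    have h : (fun ω => F s(u,v) ω * F s(w,x) ω) = fun ω => g u v ω * g w x ω := by
      funext ω; rw [hFmk, hFmk]
    rw [h, hprod]
    exact (integrable_const 1).indicator ((hA u v).inter (hA w x))
  have hFPE : ∀ e ∈ G.edgeFinset, ∀ f ∈ G.edgeFinset, e ≠ f →
      ∫ ω, F e ω * F f ω ∂μ = ((q : ℝ)⁻¹) ^ 2 := by
    intro e he f hf hef
    obtain ⟨u, v, huv, rfl⟩ := hedge e he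
    obtain ⟨w, x, hwx, rfl⟩ := hedge f hf
    have h : (fun ω => F s(u,v) ω * F s(w,x) ω) = fun ω => g u v ω * g w x ω := by
      funext ω; rw [hFmk, hFmk]
    rw [show (∫ ω, F s(u,v) ω * F s(w,x) ω ∂μ) = ∫ ω, g u v ω * g w x ω ∂μ from
      congrArg (integral μ) h]
    exact hE2 u v w x huv hwx hef
  have hFPD : ∀ e ∈ G.edgeFinset, ∫ ω, F e ω * F e ω ∂μ = (q : ℝ)⁻¹ := by
    intro e he
    obtain ⟨u, v, huv, rfl⟩ := hedge e he
    have h : (fun ω => F s(u,v) ω * F s(u,v) ω) = g u v := by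
      funext ω; rw [hFmk, hgsq]
    rw [show (∫ ω, F s(u,v) ω * F s(u,v) ω ∂μ) = ∫ ω, g u v ω ∂μ from
      congrArg (integral μ) h]
    exact hE1 u v huv
  have hint1 : ∫ ω, D ω ∂μ = m * (q : ℝ)⁻¹ := by
    rw [show D = fun ω => ∑ e ∈ G.edgeFinset, F e ω from funext hDF,
      integral_finset_sum _ hFint, Finset.sum_congr rfl hFE, Finset.sum_const, nsmul_eq_mul]
  have hDmeas : Measurable D := by
    rw [show D = fun ω => ∑ e ∈ G.edgeFinset, F e ω from funext hDF]
    refine Finset.measurable_sum _ (fun e he => ?_)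
    obtain ⟨u, v, huv, rfl⟩ := hedge e he
    have h : F s(u,v) = g u v := funext (hFmk u v)
    rw [h]; exact hgmeas u v
  have hDb : ∀ ω, ‖D ω‖ ≤ (m : ℝ) := by
    intro ω
    rw [hDF ω]
    calc ‖∑ e ∈ G.edgeFinset, F e ω‖ ≤ ∑ e ∈ G.edgeFinset, ‖F e ω‖ := norm_sum_le _ _
      _ ≤ ∑ e ∈ G.edgeFinset, 1 := by
          refine Finset.sum_le_sum (fun e he => ?_)
          obtain ⟨u, v, huv, rfl⟩ := hedge e he
          rw [hFmk]
          by_cases h : X u ω = X v ω <;> simp [hg, h]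
      _ = (m : ℝ) := by rw [Finset.sum_const, nsmul_eq_mul, mul_one]
  have hmem2 : MemLp D 2 μ :=
    MemLp.of_bound hDmeas.aestronglyMeasurable (m : ℝ) (Filter.Eventually.of_forall hDb)
  have hD2 : ∫ ω, (D ^ 2) ω ∂μ
      = (m : ℝ) * ((q : ℝ)⁻¹ + ((m - 1 : ℕ) : ℝ) * ((q : ℝ)⁻¹) ^ 2) := by
    have he2 : (D ^ 2 : Ω → ℝ)
        = fun ω => ∑ e ∈ G.edgeFinset, ∑ f ∈ G.edgeFinset, F e ω * F f ω := by
      funext ω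
      rw [Pi.pow_apply, hDF ω, sq, Finset.sum_mul_sum]
    rw [he2, integral_finset_sum _
      (fun e he => integrable_finset_sum _ (fun f hf => hFPint e he f hf)),
      Finset.sum_congr rfl
        (fun e he => integral_finset_sum _ (fun f hf => hFPint e he f hf))]
    have inner : ∀ e ∈ G.edgeFinset, ∑ f ∈ G.edgeFinset, ∫ ω, F e ω * F f ω ∂μ
        = (q : ℝ)⁻¹ + ((m - 1 : ℕ) : ℝ) * ((q : ℝ)⁻¹) ^ 2 := by
      intro e he
      rw [← Finset.add_sum_erase _ _ he, hFPD e he,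
        Finset.sum_congr rfl (fun f hf => hFPE e he f (Finset.mem_of_mem_erase hf)
          (Finset.ne_of_mem_erase hf).symm),
        Finset.sum_const, Finset.card_erase_of_mem he, nsmul_eq_mul]
    rw [Finset.sum_congr rfl inner, Finset.sum_const, nsmul_eq_mul]
  have hvar : variance D μ = (m : ℝ) * (q : ℝ)⁻¹
      + (m : ℝ) * ((m - 1 : ℕ) : ℝ) * ((q : ℝ)⁻¹) ^ 2 - ((m : ℝ) * (q : ℝ)⁻¹) ^ 2 := by
    rw [variance_eq_sub hmem2, hD2, hint1]; ring
  have hq' : (1 : ℝ) ≤ (q : ℝ) := by exact_mod_cast hq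
  have hqpos : (0 : ℝ) < (q : ℝ) := by linarith
  refine ⟨by rw [hint1, div_eq_mul_inv], ?_⟩
  rw [hvar]
  have hm1 : ((m - 1 : ℕ) : ℝ) ≤ (m : ℝ) := by exact_mod_cast Nat.sub_le m 1
  have h0m : (0 : ℝ) ≤ (m : ℝ) := Nat.cast_nonneg m
  have key : (m : ℝ) * ((m - 1 : ℕ) : ℝ) * ((q : ℝ)⁻¹) ^ 2 - ((m : ℝ) * (q : ℝ)⁻¹) ^ 2 ≤ 0 := by
    have h2 : (0 : ℝ) ≤ ((q : ℝ)⁻¹) ^ 2 := by positivity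
    have h3 : ((m : ℝ) * (q : ℝ)⁻¹) ^ 2 = (m : ℝ) * (m : ℝ) * ((q : ℝ)⁻¹) ^ 2 := by ring
    linarith [mul_le_mul_of_nonneg_right (mul_le_mul_of_nonneg_left hm1 h0m) h2]
  have pos : (0 : ℝ) ≤ (m : ℝ) * (Δ : ℝ) / (q : ℝ) ^ 2 := by positivity
  have hdiv : (m : ℝ) / (q : ℝ) = (m : ℝ) * (q : ℝ)⁻¹ := div_eq_mul_inv _ _
  linarith
end

section
/- Let G = (V, E) be a finite simple graph on n vertices with maximum degree at most Δ, where Δ ≤ n, and let ℓ be an integer with Δ/2 < ℓ ≤ Δ. Let (X_v)_{v ∈ V} be 4-wise independent uniform random variables taking values in [ℓ²], and let D = |{ {u,v} ∈ E : X_u = X_v }|. Then Pr[ D ≥ 7n/Δ ] ≤ 1/2. -/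
open MeasureTheory

/-- Equation (4.1) inside the proof of Lemma 4.7: for a graph on `n` vertices with maximum
degree at most `Δ ≤ n`, an integer `ℓ` with `Δ/2 < ℓ ≤ Δ`, and 4-wise independent uniform
random variables `(X_v)` with values in `[ℓ²]`, the number `D` of monochromatic edges
satisfies `Pr[D ≥ 7n/Δ] ≤ 1/2`. -/
theorem monochromatic_count_chebyshev {V : Type*} [Fintype V] [DecidableEq V]
    (G : SimpleGraph V) [DecidableRel G.Adj] (Δ ℓ : ℕ)
    (hΔn : Δ ≤ Fintype.card V) (hdeg : ∀ v, G.degree v ≤ Δ)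
    (hℓ1 : (Δ : ℝ) / 2 < (ℓ : ℝ)) (hℓ2 : ℓ ≤ Δ)
    {Ω : Type*} [MeasurableSpace Ω] (μ : Measure Ω) [IsProbabilityMeasure μ]
    (X : V → Ω → Fin (ℓ ^ 2)) (hmeas : ∀ v, Measurable (X v))
    (hindep : ∀ S : Finset V, S.card ≤ 4 → ∀ b : V → Fin (ℓ ^ 2),
      μ {ω | ∀ v ∈ S, X v ω = b v} = (((ℓ : ENNReal) ^ 2))⁻¹ ^ S.card)
    (D : Ω → ℝ)
    (hD : ∀ ω, D ω = ∑ e ∈ G.edgeFinset, Sym2.lift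
      ⟨fun u v => if X u ω = X v ω then (1 : ℝ) else 0, by
        intro u v
        by_cases h : X u ω = X v ω
        · simp [h]
        · have h' : ¬(X v ω = X u ω) := fun hh => h hh.symm
          simp [h, h']⟩ e) :
    μ {ω | 7 * (Fintype.card V : ℝ) / Δ ≤ D ω} ≤ 1 / 2 := by
  classical
  -- positivity facts
  have hℓpos : 0 < ℓ := by
    rcases Nat.eq_zero_or_pos ℓ with h | h
    · exfalso
      rw [h] at hℓ1
      have : (0:ℝ) ≤ (Δ:ℝ) := Nat.cast_nonneg _
      simp at hℓ1
      linarith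
    · exact h
  have hΔpos : 0 < Δ := lt_of_lt_of_le hℓpos hℓ2
  have hnpos : 0 < Fintype.card V := lt_of_lt_of_le hΔpos hΔn
  set n : ℝ := (Fintype.card V : ℝ) with hn
  have hnR : (0:ℝ) < n := by rw [hn]; exact_mod_cast hnpos
  have hΔR : (0:ℝ) < (Δ:ℝ) := by exact_mod_cast hΔpos
  have hℓR : (0:ℝ) < (ℓ:ℝ) := by exact_mod_cast hℓpos
  -- measurable sets
  have hsetmeas : ∀ u v : V, MeasurableSet {ω | X u ω = X v ω} := by
    intro u v
    have : {ω | X u ω = X v ω} = ⋃ b : Fin (ℓ^2), (X u ⁻¹' {b} ∩ X v ⁻¹' {b}) := by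
      ext ω
      simp only [Set.mem_setOf_eq, Set.mem_iUnion, Set.mem_inter_iff, Set.mem_preimage,
        Set.mem_singleton_iff]
      constructor
      · intro h; exact ⟨X v ω, h, rfl⟩
      · rintro ⟨b, h1, h2⟩; rw [h1, h2]
    rw [this]
    exact MeasurableSet.iUnion fun b =>
      ((hmeas u (measurableSet_singleton b)).inter (hmeas v (measurableSet_singleton b)))
  -- key measure computation
  have hkey : ∀ u v : V, u ≠ v → μ {ω | X u ω = X v ω} = ((ℓ : ENNReal) ^ 2)⁻¹ := by
    intro u v huv
    have hS : ({u, v} : Finset V).card = 2 := by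
      rw [Finset.card_insert_of_notMem (by simpa using huv), Finset.card_singleton]
    have hpair : ∀ b : Fin (ℓ^2), μ ({ω | X u ω = b} ∩ {ω | X v ω = b})
        = (((ℓ : ENNReal) ^ 2))⁻¹ ^ 2 := by
      intro b
      have h := hindep {u, v} (by rw [hS]; norm_num) (fun _ => b)
      rw [hS] at h
      rw [← h]
      congr 1
      ext ω
      simp [Set.mem_setOf_eq, huv, and_comm]
    have hunion : {ω | X u ω = X v ω} = ⋃ b : Fin (ℓ^2), ({ω | X u ω = b} ∩ {ω | X v ω = b}) := by
      ext ω
      simp only [Set.mem_setOf_eq, Set.mem_iUnion, Set.mem_inter_iff]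
      constructor
      · intro h; exact ⟨X v ω, h, rfl⟩
      · rintro ⟨b, h1, h2⟩; rw [h1, h2]
    have hdisj : Pairwise (Function.onFun Disjoint
        fun b : Fin (ℓ^2) => ({ω | X u ω = b} ∩ {ω | X v ω = b})) := by
      intro b b' hbb'
      refine Set.disjoint_left.2 ?_
      rintro ω ⟨h1, _⟩ ⟨h1', _⟩
      exact hbb' (h1 ▸ h1' ▸ rfl)
    have hmeasb : ∀ b : Fin (ℓ^2), MeasurableSet ({ω | X u ω = b} ∩ {ω | X v ω = b}) := by
      intro b
      exact (hmeas u (measurableSet_singleton b)).inter (hmeas v (measurableSet_singleton b))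
    rw [hunion, measure_iUnion hdisj hmeasb]
    simp only [hpair]
    rw [tsum_fintype]
    simp only [Finset.sum_const, Finset.card_univ, Fintype.card_fin, nsmul_eq_mul]
    have hℓne : ((ℓ : ENNReal) ^ 2) ≠ 0 := by
      simp [pow_eq_zero_iff]
      exact_mod_cast hℓpos.ne'
    have hℓnetop : ((ℓ : ENNReal) ^ 2) ≠ ⊤ := by
      simp
    have hcast : ((ℓ^2 : ℕ) : ENNReal) = (ℓ:ENNReal)^2 := by push_cast; ring
    rw [hcast, pow_two ((ℓ:ENNReal)^2)⁻¹, ← mul_assoc, ENNReal.mul_inv_cancel hℓne hℓnetop, one_mul]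
  -- indicator form and integrals for each edge
  have hind : ∀ u v : V, (fun ω => if X u ω = X v ω then (1:ℝ) else 0)
      = Set.indicator {ω | X u ω = X v ω} (fun _ => (1:ℝ)) := by
    intro u v
    ext ω
    by_cases h : X u ω = X v ω
    · simp [h, Set.indicator_apply, Set.mem_setOf_eq]
    · simp [h, Set.indicator_apply, Set.mem_setOf_eq]
  have hintg : ∀ u v : V, Integrable (fun ω => if X u ω = X v ω then (1:ℝ) else 0) μ := by
    intro u v
    rw [hind u v]
    exact (integrable_const (1:ℝ)).indicator (hsetmeas u v)
  have hintval : ∀ u v : V, u ≠ v →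
      ∫ ω, (if X u ω = X v ω then (1:ℝ) else 0) ∂μ = (((ℓ:ℝ)^2))⁻¹ := by
    intro u v huv
    rw [hind u v]
    rw [integral_indicator_const (1:ℝ) (hsetmeas u v)]
    rw [measureReal_def, hkey u v huv]
    simp [ENNReal.toReal_inv]
  -- D is integrable
  have hDint : Integrable D μ := by
    have : D = fun ω => ∑ e ∈ G.edgeFinset, Sym2.lift
      ⟨fun u v => if X u ω = X v ω then (1 : ℝ) else 0, by
        intro u v
        by_cases h : X u ω = X v ω
        · simp [h]
        · have h' : ¬(X v ω = X u ω) := fun hh => h hh.symm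
          simp [h, h']⟩ e := funext hD
    rw [this]
    apply integrable_finset_sum
    intro e he
    induction e with
    | _ u v =>
      simp only [Sym2.lift_mk]
      exact hintg u v
  -- expected value of D
  have hEint : ∫ ω, D ω ∂μ = (G.edgeFinset.card : ℝ) * (((ℓ:ℝ)^2))⁻¹ := by
    have h1 : ∫ ω, D ω ∂μ = ∑ e ∈ G.edgeFinset, ∫ ω, Sym2.lift
      ⟨fun u v => if X u ω = X v ω then (1 : ℝ) else 0, by
        intro u v
        by_cases h : X u ω = X v ω
        · simp [h]
        · have h' : ¬(X v ω = X u ω) := fun hh => h hh.symm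
          simp [h, h']⟩ e ∂μ := by
      rw [show (fun ω => D ω) = D from rfl, funext hD]
      apply integral_finset_sum
      intro e he
      induction e with
      | _ u v =>
        simp only [Sym2.lift_mk]
        exact hintg u v
    rw [h1]
    rw [Finset.sum_congr rfl (fun e he => ?_), Finset.sum_const, nsmul_eq_mul]
    induction e with
    | _ u v =>
      simp only [Sym2.lift_mk]
      have hadj : G.Adj u v := by
        rw [← SimpleGraph.mem_edgeSet]
        exact (SimpleGraph.mem_edgeFinset.mp he)
      exact hintval u v hadj.ne
  -- bound on edge count
  have hedge : (G.edgeFinset.card : ℝ) ≤ n * Δ / 2 := by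
    have h2 : 2 * G.edgeFinset.card = ∑ v, G.degree v := (G.sum_degrees_eq_twice_card_edges).symm
    have h3 : ∑ v, G.degree v ≤ Fintype.card V * Δ := by
      calc ∑ v, G.degree v ≤ ∑ _v : V, Δ := Finset.sum_le_sum fun v _ => hdeg v
        _ = Fintype.card V * Δ := by simp [Finset.sum_const, Finset.card_univ, mul_comm]
    have : 2 * G.edgeFinset.card ≤ Fintype.card V * Δ := h2 ▸ h3
    have := (Nat.cast_le (α := ℝ)).mpr this
    push_cast at this
    linarith
  -- Markov
  have hnonneg : 0 ≤ᵐ[μ] D := by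
    filter_upwards with ω
    rw [hD ω]
    apply Finset.sum_nonneg
    intro e he
    induction e with
    | _ u v =>
      simp only [Sym2.lift_mk]
      positivity
  set t : ℝ := 7 * n / Δ with ht
  have htpos : 0 < t := by positivity
  have hmarkov := mul_meas_ge_le_integral_of_nonneg hnonneg hDint t
  have hEbound : ∫ ω, D ω ∂μ ≤ 2 * n / Δ := by
    rw [hEint]
    have hℓ2' : (Δ:ℝ)^2 / 4 < (ℓ:ℝ)^2 := by nlinarith
    have hinv : (((ℓ:ℝ)^2))⁻¹ ≤ 4 / (Δ:ℝ)^2 := by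
      rw [inv_le_iff_one_le_mul₀ (by positivity)]
      rw [div_mul_eq_mul_div, le_div_iff₀ (by positivity)]
      nlinarith
    calc (G.edgeFinset.card : ℝ) * (((ℓ:ℝ)^2))⁻¹ ≤ (n * Δ / 2) * (4 / (Δ:ℝ)^2) := by
          apply mul_le_mul hedge hinv (by positivity) (by positivity)
      _ = 2 * n / Δ := by field_simp; ring
  have hμtoReal : (μ {ω | t ≤ D ω}).toReal ≤ 1 / 2 := by
    have h1 : t * (μ {ω | t ≤ D ω}).toReal ≤ 2 * n / Δ := le_trans hmarkov hEbound
    have h2 : 2 * n / Δ = (2/7) * t := by rw [ht]; field_simp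
    rw [h2] at h1
    have h3 : (μ {ω | t ≤ D ω}).toReal ≤ 2/7 := by
      have := (mul_le_mul_iff_right₀ htpos).mp (by linarith [h1] : t * (μ {ω | t ≤ D ω}).toReal ≤ t * (2/7))
      exact this
    linarith
  have hne : μ {ω | t ≤ D ω} ≠ ⊤ := measure_ne_top μ _
  have : μ {ω | t ≤ D ω} ≤ ENNReal.ofReal (1/2) := by
    rw [← ENNReal.ofReal_toReal hne]
    exact ENNReal.ofReal_le_ofReal hμtoReal
  calc μ {ω | 7 * (Fintype.card V : ℝ) / Δ ≤ D ω} = μ {ω | t ≤ D ω} := rfl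
    _ ≤ ENNReal.ofReal (1/2) := this
    _ = 1/2 := by rw [ENNReal.ofReal_div_of_pos (by norm_num)]; norm_num
end
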